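/- Let f : ℝ → ℝ be continuous on an interval I. If for all x, y, z ∈ I the inequality (f(x)+f(y)+f(z))/3 + f((x+y+z)/3) ≥ (2/3)·(f((x+y)/2) + f((y+z)/2) + f((x+z)/2)) holds, then f is convex on I. -/

import Mathlib

theorem stmt_6 (I : Set ℝ) (hI : I.OrdConnected)
    (f : ℝ → ℝ) (hcont : ContinuousOn f I)
    (hpop : ∀ x ∈ I, ∀ y ∈ I, ∀ z ∈ I,
      (2 / 3) * (f ((x + y) / 2) + f ((y + z) / 2) + f ((x + z) / 2)) ≤
        (f x + f y + f z) / 3 + f ((x + y + z) / 3)) :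
    ∀ x ∈ I, ∀ y ∈ I, ∀ t ∈ Set.Icc (0:ℝ) 1,
      f (t * x + (1 - t) * y) ≤ t * f x + (1 - t) * f y := by
  have key : ∀ x ∈ I, ∀ y ∈ I, x < y → ∀ t ∈ Set.Icc (0:ℝ) 1,
      f (t * x + (1 - t) * y) ≤ t * f x + (1 - t) * f y := by
    intro x hx y hy hxy t ht
    have hsub : Set.Icc x y ⊆ I := hI.out hx hy
    have hyx : y - x ≠ 0 := sub_ne_zero.mpr hxy.ne'
    set L : ℝ → ℝ := fun u => ((y - u) * f x + (u - x) * f y) / (y - x) with hLdef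
    set g : ℝ → ℝ := fun u => f u - L u with hgdef
    have hLx : L x = f x := by
      simp only [hLdef]; field_simp; ring
    have hLy : L y = f y := by
      simp only [hLdef]; field_simp; ring
    have hgc : ContinuousOn g (Set.Icc x y) := by
      apply ContinuousOn.sub (hcont.mono hsub)
      apply Continuous.continuousOn
      simp only [hLdef]
      fun_prop
    obtain ⟨c, hc, hmax⟩ := isCompact_Icc.exists_isMaxOn
      (Set.nonempty_Icc.mpr hxy.le) hgc
    have hgc0 : g c ≤ 0 := by
      rcases le_total c ((x + y) / 2) with hcm | hcm
      · -- a = 2c - x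
        have ha : (2 * c - x) ∈ Set.Icc x y := ⟨by linarith [hc.1], by linarith⟩
        have hd : (4 * c - x) / 3 ∈ Set.Icc x y := ⟨by linarith [hc.1], by linarith⟩
        have h1 := hpop (2 * c - x) (hsub ha) (2 * c - x) (hsub ha) x hx
        rw [show (2 * c - x + (2 * c - x)) / 2 = 2 * c - x from by ring,
            show (2 * c - x + x) / 2 = c from by ring,
            show (2 * c - x + (2 * c - x) + x) / 3 = (4 * c - x) / 3 from by ring] at h1
        have hLc : L c = L x / 4 + 3 / 4 * L ((4 * c - x) / 3) := by
          simp only [hLdef]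
          field_simp
          ring
        have hgd : g ((4 * c - x) / 3) ≤ g c := hmax hd
        simp only [hgdef] at hgd ⊢
        linarith
      · -- a = 2c - y
        have ha : (2 * c - y) ∈ Set.Icc x y := ⟨by linarith, by linarith [hc.2]⟩
        have hd : (4 * c - y) / 3 ∈ Set.Icc x y := ⟨by linarith, by linarith [hc.2]⟩
        have h1 := hpop (2 * c - y) (hsub ha) (2 * c - y) (hsub ha) y hy
        rw [show (2 * c - y + (2 * c - y)) / 2 = 2 * c - y from by ring,
            show (2 * c - y + y) / 2 = c from by ring,
            show (2 * c - y + (2 * c - y) + y) / 3 = (4 * c - y) / 3 from by ring] at h1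
        have hLc : L c = L y / 4 + 3 / 4 * L ((4 * c - y) / 3) := by
          simp only [hLdef]
          field_simp
          ring
        have hgd : g ((4 * c - y) / 3) ≤ g c := hmax hd
        simp only [hgdef] at hgd ⊢
        linarith
    have hp : t * x + (1 - t) * y ∈ Set.Icc x y := by
      constructor
      · nlinarith [ht.1, ht.2]
      · nlinarith [ht.1, ht.2]
    have hgp : g (t * x + (1 - t) * y) ≤ g c := hmax hp
    have hLp : L (t * x + (1 - t) * y) = t * f x + (1 - t) * f y := by
      simp only [hLdef]
      field_simp
      ring
    simp only [hgdef] at hgp hgc0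
    linarith
  intro x hx y hy t ht
  rcases lt_trichotomy x y with h | h | h
  · exact key x hx y hy h t ht
  · subst h
    have : t * x + (1 - t) * x = x := by ring
    rw [this]
    linarith
  · have h2 := key y hy x hx h (1 - t) ⟨by linarith [ht.2], by linarith [ht.1]⟩
    have e1 : (1 - t) * y + (1 - (1 - t)) * x = t * x + (1 - t) * y := by ring
    rw [e1] at h2
    linarith
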